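/- Let F ∈ ℂ^{2n×2n}, G ∈ ℂ^{2n×2m}, H ∈ ℂ^{2m×2n}, and suppose there exists an invertible Hermitian matrix Θ ∈ ℂ^{2n×2n} such that FΘ + ΘF† + GJ_mG† = 0 and G = −ΘH†J_m. Define Γ(s) := H(sI − F)^{−1}G + I. Then for every s ∈ ℂ such that both sI − F and −conj(s)I − F are invertible, Γ(−conj(s))† J_m Γ(s) = J_m. That is, the transfer function of a system satisfying the physical realizability equations is (J,J)-unitary at every point where it is defined. -/
import Mathlib

set_option maxHeartbeats 1000000

open Matrix

/-- `J_k = [[I, 0],[0, −I]]`. -/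
def Jmat (k : ℕ) : Matrix (Fin k ⊕ Fin k) (Fin k ⊕ Fin k) ℂ :=
  fromBlocks 1 0 0 (-1)

lemma Jmat_mul_Jmat (k : ℕ) : Jmat k * Jmat k = 1 := by
  simp [Jmat, fromBlocks_multiply, ← fromBlocks_one]

lemma Jmat_conjTranspose (k : ℕ) : (Jmat k)ᴴ = Jmat k := by
  simp [Jmat, fromBlocks_conjTranspose]

/-- if `(F, G, H, I)` satisfies the physical realizability equations
`FΘ + ΘF† + GJ_mG† = 0` and `G = −ΘH†J_m` for some invertible Hermitian `Θ`, then its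
transfer function `Γ(s) = H(sI − F)⁻¹G + I` is `(J,J)`-unitary at every point where it is
defined: `Γ(−conj(s))† J_m Γ(s) = J_m`. -/
theorem physically_realizable_transfer_JJ_unitary
    (n m : ℕ)
    (F : Matrix (Fin n ⊕ Fin n) (Fin n ⊕ Fin n) ℂ)
    (G : Matrix (Fin n ⊕ Fin n) (Fin m ⊕ Fin m) ℂ)
    (H : Matrix (Fin m ⊕ Fin m) (Fin n ⊕ Fin n) ℂ)
    (Θ : Matrix (Fin n ⊕ Fin n) (Fin n ⊕ Fin n) ℂ)
    (hΘherm : Θ.IsHermitian)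
    (hΘunit : IsUnit Θ)
    (hRic : F * Θ + Θ * Fᴴ + G * Jmat m * Gᴴ = 0)
    (hG : G = -(Θ * Hᴴ * Jmat m)) :
    ∀ s : ℂ,
      IsUnit (s • (1 : Matrix (Fin n ⊕ Fin n) (Fin n ⊕ Fin n) ℂ) - F) →
      IsUnit ((-(starRingEnd ℂ) s) • (1 : Matrix (Fin n ⊕ Fin n) (Fin n ⊕ Fin n) ℂ) - F) →
      (H * ((-(starRingEnd ℂ) s) • (1 : Matrix (Fin n ⊕ Fin n) (Fin n ⊕ Fin n) ℂ) - F)⁻¹ * G + 1)ᴴ *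
        Jmat m *
        (H * (s • (1 : Matrix (Fin n ⊕ Fin n) (Fin n ⊕ Fin n) ℂ) - F)⁻¹ * G + 1) = Jmat m := by
  intro s hA hB
  set J := Jmat m with hJ
  set A : Matrix (Fin n ⊕ Fin n) (Fin n ⊕ Fin n) ℂ := s • 1 - F with hAdef
  set B : Matrix (Fin n ⊕ Fin n) (Fin n ⊕ Fin n) ℂ := (-(starRingEnd ℂ) s) • 1 - F with hBdef
  have hAdet : IsUnit A.det := (isUnit_iff_isUnit_det A).mp hA
  have hBdet : IsUnit B.det := (isUnit_iff_isUnit_det B).mp hB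
  have hBHdet : IsUnit (Bᴴ).det := by
    rw [det_conjTranspose]; exact hBdet.map (starRingEnd ℂ)
  have hΘdet : IsUnit Θ.det := (isUnit_iff_isUnit_det Θ).mp hΘunit
  have hΘinv : (Θ⁻¹)ᴴ = Θ⁻¹ := hΘherm.inv.eq
  have hJJ : J * J = 1 := Jmat_mul_Jmat m
  have hJc : Jᴴ = J := Jmat_conjTranspose m
  have hΘΘ' : Θ * Θ⁻¹ = 1 := mul_nonsing_inv Θ hΘdet
  have cancelΘ : ∀ X : Matrix (Fin n ⊕ Fin n) (Fin m ⊕ Fin m) ℂ, Θ⁻¹ * (Θ * X) = X :=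
    fun X => nonsing_inv_mul_cancel_left Θ X hΘdet
  have cancelΘ2 : ∀ X : Matrix (Fin n ⊕ Fin n) (Fin n ⊕ Fin n) ℂ, Θ⁻¹ * (Θ * X) = X :=
    fun X => nonsing_inv_mul_cancel_left Θ X hΘdet
  have cancelB : ∀ X : Matrix (Fin n ⊕ Fin n) (Fin m ⊕ Fin m) ℂ, (Bᴴ)⁻¹ * (Bᴴ * X) = X :=
    fun X => nonsing_inv_mul_cancel_left Bᴴ X hBHdet
  -- Hᴴ * J = -(Θ⁻¹ * G)
  have hHJ : Hᴴ * J = -(Θ⁻¹ * G) := by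
    rw [hG]
    simp only [Matrix.mul_neg, Matrix.neg_mul, neg_neg, Matrix.mul_assoc, cancelΘ]
  -- J * H = -(Gᴴ * Θ⁻¹)
  have hJH : J * H = -(Gᴴ * Θ⁻¹) := by
    have := congrArg conjTranspose hHJ
    simpa [conjTranspose_mul, conjTranspose_neg, hJc, hΘinv] using this
  have hBH : Bᴴ = (-s) • 1 - Fᴴ := by
    rw [hBdef, conjTranspose_sub, conjTranspose_smul, conjTranspose_one]
    simp
  have hRic' : G * J * Gᴴ + (F * Θ + Θ * Fᴴ) = 0 := by rw [add_comm]; exact hRic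
  have hGJG : G * J * Gᴴ = -(F * Θ + Θ * Fᴴ) := eq_neg_of_add_eq_zero_left hRic'
  have hmid : Θ⁻¹ * (G * J * Gᴴ) * Θ⁻¹ = Θ⁻¹ * A + Bᴴ * Θ⁻¹ := by
    rw [hGJG, hBH, hAdef]
    simp only [Matrix.mul_neg, Matrix.neg_mul, Matrix.mul_add, Matrix.add_mul,
      Matrix.mul_sub, Matrix.sub_mul, Matrix.mul_assoc, Matrix.smul_mul, Matrix.mul_smul,
      Matrix.mul_one, Matrix.one_mul, hΘΘ', cancelΘ2, neg_smul, neg_add]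
    abel
  have e1 : Hᴴ * J * H = (Hᴴ * J) * J * (J * H) := by
    rw [Matrix.mul_assoc (Hᴴ * J) J (J * H), ← Matrix.mul_assoc J J H, hJJ, Matrix.one_mul]
  have hHJH : Hᴴ * J * H = Θ⁻¹ * A + Bᴴ * Θ⁻¹ := by
    rw [e1, hHJ, hJH]
    calc -(Θ⁻¹ * G) * J * -(Gᴴ * Θ⁻¹) = Θ⁻¹ * (G * J * Gᴴ) * Θ⁻¹ := by
          simp only [Matrix.mul_neg, Matrix.neg_mul, neg_neg, Matrix.mul_assoc]
      _ = Θ⁻¹ * A + Bᴴ * Θ⁻¹ := hmid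
  -- instance lemmas for the final computation
  have hBinv : (B⁻¹)ᴴ = (Bᴴ)⁻¹ := conjTranspose_nonsing_inv B
  have t1 : Hᴴ * (J * (H * (A⁻¹ * G))) = Θ⁻¹ * G + Bᴴ * (Θ⁻¹ * (A⁻¹ * G)) := by
    have e : Hᴴ * (J * (H * (A⁻¹ * G))) = (Hᴴ * J * H) * (A⁻¹ * G) := by
      simp only [Matrix.mul_assoc]
    rw [e, hHJH, Matrix.add_mul, Matrix.mul_assoc Θ⁻¹ A,
      Matrix.mul_nonsing_inv_cancel_left _ _ hAdet, Matrix.mul_assoc]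
  have t3 : J * (H * (A⁻¹ * G)) = -(Gᴴ * (Θ⁻¹ * (A⁻¹ * G))) := by
    rw [← Matrix.mul_assoc J H, hJH]
    simp only [Matrix.neg_mul, Matrix.mul_assoc]
  -- main computation
  rw [conjTranspose_add, conjTranspose_one, conjTranspose_mul, conjTranspose_mul, hBinv]
  simp only [Matrix.add_mul, Matrix.mul_add, Matrix.one_mul, Matrix.mul_one, Matrix.mul_assoc]
  rw [t1, t3, hHJ]
  simp only [Matrix.mul_add, Matrix.mul_neg, cancelB]
  abel
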